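/- The LOT approximation is bounded above by the optimal transport cost through the reference: for discrete probability measures R, E, Ẽ on ℝ^d with optimal plans r ∈ Γ₀(R,E), r̃ ∈ Γ₀(R,Ẽ), one has LOT_{r,r̃}(E,Ẽ) ≤ W₂(R,E) + W₂(R,Ẽ). -/

import Mathlib

open Finset

noncomputable section

variable {d : ℕ}

/-- Jensen's inequality for the barycentric projection. -/
lemma jensen_step {κ : Type*} [Fintype κ] {R : ℝ} (hR : 0 < R)
    (r : κ → ℝ) (hr : ∀ j, 0 ≤ r j) (hsum : ∑ j, r j = R)
    (y : EuclideanSpace ℝ (Fin d)) (x : κ → EuclideanSpace ℝ (Fin d)) :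
    R * ‖(R⁻¹ • ∑ j, r j • x j) - y‖ ^ 2 ≤ ∑ j, r j * ‖y - x j‖ ^ 2 := by
  have hv : (R⁻¹ • ∑ j, r j • x j) - y = R⁻¹ • ∑ j, r j • (x j - y) := by
    have h1 : ∑ j, r j • (x j - y) = (∑ j, r j • x j) - R • y := by
      simp [smul_sub, Finset.sum_sub_distrib, ← Finset.sum_smul, hsum]
    rw [h1, smul_sub, smul_smul, inv_mul_cancel₀ hR.ne', one_smul]
  have hnorm : ‖(R⁻¹ • ∑ j, r j • x j) - y‖ ≤ R⁻¹ * ∑ j, r j * ‖y - x j‖ := by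
    rw [hv, norm_smul, Real.norm_eq_abs, abs_of_nonneg (inv_nonneg.2 hR.le)]
    gcongr
    refine (norm_sum_le _ _).trans (le_of_eq ?_)
    refine Finset.sum_congr rfl fun j _ => ?_
    rw [norm_smul, Real.norm_eq_abs, abs_of_nonneg (hr j), norm_sub_rev]
  have hcs : (∑ j, r j * ‖y - x j‖) ^ 2 ≤ R * ∑ j, r j * ‖y - x j‖ ^ 2 := by
    rw [← hsum]
    exact Finset.sum_sq_le_sum_mul_sum_of_sq_eq_mul _ (fun j _ => hr j)
      (fun j _ => mul_nonneg (hr j) (sq_nonneg _)) (fun j _ => by ring)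
  calc R * ‖(R⁻¹ • ∑ j, r j • x j) - y‖ ^ 2
      ≤ R * (R⁻¹ * ∑ j, r j * ‖y - x j‖) ^ 2 := by
        gcongr
    _ = R⁻¹ * (∑ j, r j * ‖y - x j‖) ^ 2 := by
        field_simp
    _ ≤ R⁻¹ * (R * ∑ j, r j * ‖y - x j‖ ^ 2) := by gcongr
    _ = ∑ j, r j * ‖y - x j‖ ^ 2 := by field_simp

/-- Minkowski inequality for weighted ℓ² sums. -/
lemma minkowski_step {ι : Type*} [Fintype ι] (R A B : ι → ℝ) (hR : ∀ i, 0 ≤ R i) :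
    Real.sqrt (∑ i, R i * (A i + B i) ^ 2) ≤
      Real.sqrt (∑ i, R i * A i ^ 2) + Real.sqrt (∑ i, R i * B i ^ 2) := by
  let u : EuclideanSpace ℝ ι := WithLp.toLp 2 (fun i => Real.sqrt (R i) * A i)
  let v : EuclideanSpace ℝ ι := WithLp.toLp 2 (fun i => Real.sqrt (R i) * B i)
  have h := norm_add_le u v
  rw [EuclideanSpace.norm_eq, EuclideanSpace.norm_eq, EuclideanSpace.norm_eq] at h
  have hu : ∀ i, ‖(u + v) i‖ ^ 2 = R i * (A i + B i) ^ 2 := fun i => by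
    show ‖Real.sqrt (R i) * A i + Real.sqrt (R i) * B i‖ ^ 2 = _
    rw [← mul_add, Real.norm_eq_abs, sq_abs, mul_pow, Real.sq_sqrt (hR i)]
  have h2 : ∀ i, ‖u i‖ ^ 2 = R i * A i ^ 2 := fun i => by
    rw [Real.norm_eq_abs, sq_abs, mul_pow, Real.sq_sqrt (hR i)]
  have h3 : ∀ i, ‖v i‖ ^ 2 = R i * B i ^ 2 := fun i => by
    rw [Real.norm_eq_abs, sq_abs, mul_pow, Real.sq_sqrt (hR i)]
  simpa only [Finset.sum_congr rfl fun i _ => hu i, Finset.sum_congr rfl fun i _ => h2 i,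
    Finset.sum_congr rfl fun i _ => h3 i] using h

/-- The 2-Wasserstein distance between finitely supported measures, as an infimum over
discrete transport plans. -/
noncomputable def discW2 {ι κ : Type*} [Fintype ι] [Fintype κ]
    (R : ι → ℝ) (y : ι → EuclideanSpace ℝ (Fin d))
    (E : κ → ℝ) (x : κ → EuclideanSpace ℝ (Fin d)) : ℝ :=
  sInf { c | ∃ g : ι → κ → ℝ, (∀ i j, 0 ≤ g i j) ∧ (∀ i, ∑ j, g i j = R i) ∧
    (∀ j, ∑ i, g i j = E j) ∧ c = Real.sqrt (∑ i, ∑ j, g i j * ‖y i - x j‖ ^ 2) }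

/-- The LOT approximation is bounded above by the optimal transport cost through the
reference: `LOT_{r,r̃}(E,Ẽ) ≤ W₂(R,E) + W₂(R,Ẽ)` for optimal plans `r, r̃`. -/
theorem LOT_le_W2_add_W2
    {ι κ κ' : Type*} [Fintype ι] [Fintype κ] [Fintype κ']
    (R : ι → ℝ) (y : ι → EuclideanSpace ℝ (Fin d))
    (E : κ → ℝ) (x : κ → EuclideanSpace ℝ (Fin d))
    (E' : κ' → ℝ) (x' : κ' → EuclideanSpace ℝ (Fin d))
    (hR : ∀ i, 0 < R i) (hE : ∀ j, 0 ≤ E j) (hE' : ∀ k, 0 ≤ E' k)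
    (hRsum : ∑ i, R i = 1) (hEsum : ∑ j, E j = 1) (hE'sum : ∑ k, E' k = 1)
    -- `r` is an optimal transport plan from `R` to `E`
    (r : ι → κ → ℝ) (hr : ∀ i j, 0 ≤ r i j)
    (hrRow : ∀ i, ∑ j, r i j = R i) (hrCol : ∀ j, ∑ i, r i j = E j)
    (hrOpt : Real.sqrt (∑ i, ∑ j, r i j * ‖y i - x j‖ ^ 2) = discW2 R y E x)
    -- `r'` is an optimal transport plan from `R` to `Ẽ`
    (r' : ι → κ' → ℝ) (hr' : ∀ i k, 0 ≤ r' i k)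
    (hr'Row : ∀ i, ∑ k, r' i k = R i) (hr'Col : ∀ k, ∑ i, r' i k = E' k)
    (hr'Opt : Real.sqrt (∑ i, ∑ k, r' i k * ‖y i - x' k‖ ^ 2) = discW2 R y E' x')
    -- barycentric projections
    (z z' : ι → EuclideanSpace ℝ (Fin d))
    (hz : ∀ i, z i = (R i)⁻¹ • ∑ j, r i j • x j)
    (hz' : ∀ i, z' i = (R i)⁻¹ • ∑ k, r' i k • x' k) :
    Real.sqrt (∑ i, R i * ‖z i - z' i‖ ^ 2) ≤ discW2 R y E x + discW2 R y E' x' := by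
  rw [← hrOpt, ← hr'Opt]
  set A : ι → ℝ := fun i => ‖z i - y i‖ with hA
  set B : ι → ℝ := fun i => ‖y i - z' i‖ with hB
  have h1 : ∑ i, R i * ‖z i - z' i‖ ^ 2 ≤ ∑ i, R i * (A i + B i) ^ 2 := by
    refine Finset.sum_le_sum fun i _ => ?_
    refine mul_le_mul_of_nonneg_left ?_ (hR i).le
    have htri : ‖z i - z' i‖ ≤ A i + B i := by
      simpa using norm_sub_le_norm_sub_add_norm_sub (z i) (y i) (z' i)
    exact pow_le_pow_left₀ (norm_nonneg _) htri 2
  have h3 : ∑ i, R i * A i ^ 2 ≤ ∑ i, ∑ j, r i j * ‖y i - x j‖ ^ 2 := by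
    refine Finset.sum_le_sum fun i _ => ?_
    have := jensen_step (hR i) (r i) (hr i) (hrRow i) (y i) x
    show R i * ‖z i - y i‖ ^ 2 ≤ _
    rw [hz i]
    exact this
  have h4 : ∑ i, R i * B i ^ 2 ≤ ∑ i, ∑ k, r' i k * ‖y i - x' k‖ ^ 2 := by
    refine Finset.sum_le_sum fun i _ => ?_
    have := jensen_step (hR i) (r' i) (hr' i) (hr'Row i) (y i) x'
    show R i * ‖y i - z' i‖ ^ 2 ≤ _
    rw [norm_sub_rev, hz' i]
    exact this
  calc Real.sqrt (∑ i, R i * ‖z i - z' i‖ ^ 2)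
      ≤ Real.sqrt (∑ i, R i * (A i + B i) ^ 2) := Real.sqrt_le_sqrt h1
    _ ≤ Real.sqrt (∑ i, R i * A i ^ 2) + Real.sqrt (∑ i, R i * B i ^ 2) :=
        minkowski_step R A B fun i => (hR i).le
    _ ≤ _ := add_le_add (Real.sqrt_le_sqrt h3) (Real.sqrt_le_sqrt h4)

end
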